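/- Let k be a field, n ≥ 1, and r₀,…,r_n nonnegative integers with r := r₀ + ⋯ + r_n > 0. Write each vector x ∈ k^r in blocks x = (x_{(0)},…,x_{(n)}) with x_{(ℓ)} ∈ k^{r_ℓ}. For i = 0,…,n−1, let M_i : k^r → k^r be the linear map that is the identity on every block except block i+1, where it is zero; let M_n : k^r → k^r be the linear map that is zero on block 0 and the identity on every other block. Suppose x₀,…,x_n ∈ k^r are all nonzero and satisfy, cyclically (with x_{n+1} := x₀), that M_i x_i and x_{i+1} are linearly dependent (i.e. M_i x_i ∧ x_{i+1} = 0) for each i = 0,…,n. Then there exists i ∈ {0,…,n} such that the block (x_i)_{(j)} with j ≡ i+1 (mod n+1) is nonzero. -/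

import Mathlib

/-- Let `k` be a field, `n ≥ 1`, and `r₀, …, r_n` nonnegative
integers with `r := r₀ + ⋯ + r_n > 0`. Vectors of `k^r` are written in blocks,
as elements of `Π ℓ, (Fin (r ℓ) → k)`. For `i = 0, …, n`, let `M_i` be the
linear map that is zero on block `i + 1 (mod n + 1)` and the identity on every
other block. Suppose `x₀, …, x_n` are all nonzero and satisfy, cyclically, that
`M_i x_i` and `x_{i+1}` are linearly dependent. Then there exists `i` such that
the block of `x_i` indexed by `i + 1 (mod n + 1)` is nonzero. -/
theorem statement_19 {k : Type*} [Field k] (n : ℕ) (hn : 1 ≤ n)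
    (r : Fin (n + 1) → ℕ) (hr : 0 < ∑ ℓ, r ℓ)
    (x : Fin (n + 1) → ∀ ℓ : Fin (n + 1), Fin (r ℓ) → k)
    (hx : ∀ i, x i ≠ 0)
    (hdep : ∀ i : Fin (n + 1), ∃ c : k,
      (fun ℓ : Fin (n + 1) => if ℓ = i + 1 then (0 : Fin (r ℓ) → k) else x i ℓ) =
        c • x (i + 1)) :
    ∃ i : Fin (n + 1), x i (i + 1) ≠ 0 := by
  by_contra hcon
  push_neg at hcon
  have key : ∀ i : Fin (n + 1), ∃ c : k, c ≠ 0 ∧ x i = c • x (i + 1) := by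
    intro i
    obtain ⟨c, hc⟩ := hdep i
    have hx' : x i = c • x (i + 1) := by
      rw [← hc]
      funext ℓ
      by_cases hl : ℓ = i + 1
      · subst hl
        simp [hcon i]
      · simp [hl]
    refine ⟨c, ?_, hx'⟩
    rintro rfl
    exact hx i (by simpa using hx')
  have main : ∀ m : Fin (n + 1), ∃ d : k, d ≠ 0 ∧ x 0 = d • x m := by
    intro m
    induction m using Fin.induction with
    | zero => exact ⟨1, one_ne_zero, (one_smul _ _).symm⟩
    | succ i ih =>
      obtain ⟨d, hd, hxd⟩ := ih
      obtain ⟨c, hc, hxc⟩ := key i.castSucc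
      have hstep : i.castSucc + 1 = i.succ := by
        ext
        simp [Fin.val_add_one_of_lt (Fin.castSucc_lt_last i)]
      refine ⟨d * c, mul_ne_zero hd hc, ?_⟩
      rw [hxd, hxc, hstep, smul_smul]
  have hx0 : x 0 = 0 := by
    funext ℓ j
    obtain ⟨d, hd, hxd⟩ := main (ℓ - 1)
    have hℓ : (ℓ - 1) + 1 = ℓ := sub_add_cancel ℓ 1
    have hz : x (ℓ - 1) ℓ = 0 := by
      have := hcon (ℓ - 1)
      rwa [hℓ] at this
    have := congrFun (congrFun hxd ℓ) j
    simp [this, hz]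
  exact hx 0 hx0
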